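/- Let β be a root of the root pairing. Then for every f ∈ ℤ[M] one has f = T_β^1(f) + (1 − e^{−β})·T_β^0(f); equivalently, as ℤ-linear endomorphisms of ℤ[M], the identity map equals T_β^1 plus multiplication by (1 − e^{−β}) composed with T_β^0. In particular, for every weight λ ∈ M, e^λ = e^{s_β λ} + (1 − e^{−β})·T_β^0(e^λ). -/

import Mathlib

/-- The basis element `e^λ` of the group algebra `ℤ[M]`. -/
noncomputable def expWeight {M : Type*} [AddCommGroup M] (lam : M) :
    AddMonoidAlgebra ℤ M :=
  AddMonoidAlgebra.single lam 1

/-- The value of the Demazure operator `T_β^0` on the basis element `e^λ`,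
for the root `β = P.root i`. -/
noncomputable def demazureTerm {ι M N : Type*} [AddCommGroup M] [AddCommGroup N]
    (P : RootPairing ι ℤ M N) (i : ι) (lam : M) : AddMonoidAlgebra ℤ M :=
  if 0 < P.coroot' i lam then
    ∑ j ∈ Finset.range (P.coroot' i lam).toNat, expWeight (lam - (j : ℤ) • P.root i)
  else if P.coroot' i lam < 0 then
    -∑ j ∈ Finset.Icc 1 (-(P.coroot' i lam)).toNat, expWeight (lam + (j : ℤ) • P.root i)
  else 0

/-- The Demazure operator `T_β^0 : ℤ[M] → ℤ[M]` for the root `β = P.root i`. -/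
noncomputable def TZero {ι M N : Type*} [AddCommGroup M] [AddCommGroup N]
    (P : RootPairing ι ℤ M N) (i : ι) :
    AddMonoidAlgebra ℤ M →ₗ[ℤ] AddMonoidAlgebra ℤ M :=
  (Finsupp.lift (AddMonoidAlgebra ℤ M) ℤ M (demazureTerm P i)) ∘ₗ
    (AddMonoidAlgebra.coeffLinearEquiv ℤ).toLinearMap

/-- The operator `T_β^1 : ℤ[M] → ℤ[M]`, `e^λ ↦ e^{s_β λ}`, for the root `β = P.root i`. -/
noncomputable def TOne {ι M N : Type*} [AddCommGroup M] [AddCommGroup N]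
    (P : RootPairing ι ℤ M N) (i : ι) :
    AddMonoidAlgebra ℤ M →ₗ[ℤ] AddMonoidAlgebra ℤ M :=
  (Finsupp.lift (AddMonoidAlgebra ℤ M) ℤ M (fun lam => expWeight (P.reflection i lam))) ∘ₗ
    (AddMonoidAlgebra.coeffLinearEquiv ℤ).toLinearMap

lemma expWeight_mul {M : Type*} [AddCommGroup M] (a b : M) :
    expWeight a * expWeight (b : M) = expWeight (a + b) := by
  simp [expWeight, AddMonoidAlgebra.single_mul_single]

lemma TZero_single {ι M N : Type*} [AddCommGroup M] [AddCommGroup N]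
    (P : RootPairing ι ℤ M N) (i : ι) (lam : M) :
    TZero P i (expWeight lam) = demazureTerm P i lam := by
  rw [TZero, expWeight, LinearMap.comp_apply, LinearEquiv.coe_coe,
    AddMonoidAlgebra.coeffLinearEquiv_apply, AddMonoidAlgebra.coeff_single]
  erw [Finsupp.lift_apply, Finsupp.sum_single_index (by simp), one_smul]

lemma TOne_single {ι M N : Type*} [AddCommGroup M] [AddCommGroup N]
    (P : RootPairing ι ℤ M N) (i : ι) (lam : M) :
    TOne P i (expWeight lam) = expWeight (P.reflection i lam) := by
  rw [TOne, expWeight, LinearMap.comp_apply, LinearEquiv.coe_coe,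
    AddMonoidAlgebra.coeffLinearEquiv_apply, AddMonoidAlgebra.coeff_single]
  erw [Finsupp.lift_apply, Finsupp.sum_single_index (by simp), one_smul]

lemma demazure_key {ι M N : Type*} [AddCommGroup M] [AddCommGroup N]
    (P : RootPairing ι ℤ M N) (i : ι) (lam : M) :
    expWeight lam = expWeight (P.reflection i lam)
      + (1 - expWeight (-(P.root i))) * demazureTerm P i lam := by
  set n : ℤ := P.coroot' i lam with hn
  have hrefl : P.reflection i lam = lam - n • P.root i := P.reflection_apply (i := i) lam
  rcases lt_trichotomy n 0 with hneg | hzero | hpos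
  · set m := (-n).toNat with hm
    have hmn : (m : ℤ) = -n := Int.toNat_of_nonneg (by omega)
    have hd : demazureTerm P i lam
        = -∑ j ∈ Finset.Icc 1 m, expWeight (lam + (j : ℤ) • P.root i) := by
      rw [demazureTerm, if_neg (by omega), if_pos (by omega)]
    set h : ℕ → AddMonoidAlgebra ℤ M := fun j => expWeight (lam + (j : ℤ) • P.root i) with hh
    have hIcc : ∑ j ∈ Finset.Icc 1 m, h j = ∑ j ∈ Finset.range m, h (j + 1) := by
      rw [← Finset.Ico_add_one_right_eq_Icc, Finset.sum_Ico_eq_sum_range]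
      simp [add_comm]
    have hstep : ∀ j : ℕ, (1 - expWeight (-(P.root i))) * (-(h (j + 1))) = h j - h (j + 1) := by
      intro j
      have : expWeight (-(P.root i)) * h (j + 1) = h j := by
        rw [hh]
        simp only [expWeight_mul]
        congr 1
        push_cast
        module
      rw [mul_neg, sub_mul, one_mul, this]
      abel
    have hsum : (1 - expWeight (-(P.root i))) * demazureTerm P i lam
        = h 0 - h m := by
      rw [hd, show ((Finset.Icc 1 m).sum h) = ∑ j ∈ Finset.Icc 1 m, h j from rfl, hIcc,
        ← Finset.sum_neg_distrib, Finset.mul_sum,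
        Finset.sum_congr rfl fun j _ => hstep j, Finset.sum_range_sub']
    rw [hsum, hrefl]
    have : lam - n • P.root i = lam + (m : ℤ) • P.root i := by rw [hmn]; module
    rw [this]
    have h0 : expWeight lam = h 0 := by simp [hh]
    rw [h0]
    show h 0 = h m + (h 0 - h m)
    abel
  · have hd : demazureTerm P i lam = 0 := by
      rw [demazureTerm, if_neg (by omega), if_neg (by omega)]
    rw [hd, hrefl, hzero]
    simp
  · set m := n.toNat with hm
    have hmn : (m : ℤ) = n := Int.toNat_of_nonneg (by omega)
    have hd : demazureTerm P i lam
        = ∑ j ∈ Finset.range m, expWeight (lam - (j : ℤ) • P.root i) := by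
      rw [demazureTerm, if_pos (by omega)]
    set g : ℕ → AddMonoidAlgebra ℤ M := fun j => expWeight (lam - (j : ℤ) • P.root i) with hg
    have hstep : ∀ j : ℕ, (1 - expWeight (-(P.root i))) * g j = g j - g (j + 1) := by
      intro j
      have : expWeight (-(P.root i)) * g j = g (j + 1) := by
        rw [hg]
        simp only [expWeight_mul]
        congr 1
        push_cast
        module
      rw [sub_mul, one_mul, this]
    have hsum : (1 - expWeight (-(P.root i))) * demazureTerm P i lam = g 0 - g m := by
      rw [hd, show ((Finset.range m).sum g) = ∑ j ∈ Finset.range m, g j from rfl,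
        Finset.mul_sum, Finset.sum_congr rfl fun j _ => hstep j, Finset.sum_range_sub']
    rw [hsum, hrefl]
    have : lam - n • P.root i = lam - (m : ℤ) • P.root i := by rw [hmn]
    rw [this]
    have g0 : expWeight lam = g 0 := by simp [hg]
    rw [g0]
    show g 0 = g m + (g 0 - g m)
    abel

/-- For a root `β = P.root i`, every `f ∈ ℤ[M]` satisfies
`f = T_β^1(f) + (1 - e^{-β}) * T_β^0(f)`; in particular, for every weight `λ`,
`e^λ = e^{s_β λ} + (1 - e^{-β}) * T_β^0(e^λ)`. -/
theorem demazure_decomposition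
    {ι M N : Type*} [AddCommGroup M] [Module.Free ℤ M] [Module.Finite ℤ M]
    [AddCommGroup N] (P : RootPairing ι ℤ M N) (i : ι) :
    (∀ f : AddMonoidAlgebra ℤ M,
      f = TOne P i f + (1 - expWeight (-(P.root i))) * TZero P i f) ∧
    (∀ lam : M,
      expWeight lam = expWeight (P.reflection i lam)
        + (1 - expWeight (-(P.root i))) * TZero P i (expWeight lam)) := by
  have hsingle : ∀ lam : M,
      expWeight lam = expWeight (P.reflection i lam)
        + (1 - expWeight (-(P.root i))) * TZero P i (expWeight lam) := by
    intro lam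
    rw [TZero_single]
    exact demazure_key P i lam
  refine ⟨?_, hsingle⟩
  intro f
  induction f using AddMonoidAlgebra.induction_linear with
  | zero => simp
  | add f g hf hg =>
    rw [map_add, map_add, mul_add]
    conv_lhs => rw [hf, hg]
    abel
  | single lam b =>
    have : (AddMonoidAlgebra.single lam b : AddMonoidAlgebra ℤ M) = b • expWeight lam := by
      simp [expWeight, AddMonoidAlgebra.smul_single]
    rw [this, map_smul, map_smul, mul_smul_comm, ← smul_add, TOne_single, ← hsingle lam]
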